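/- arXiv:1810.05522 — 2 statements merged into one kernel-verified Lean document; each statement's English description precedes it below -/
import Mathlib

section
/- Let N = 2m with m ≥ 1. A diagonal restricted Dicke state ρ = Σ_{k=0}^{N(d−1)} p_k |R_{N,d;k}⟩⟨R_{N,d;k}| (p_k ≥ 0) is m-PPT if and only if the Hankel matrices (p_{i+j})_{i,j=0}^{m(d−1)} and (p_{i+j+1})_{i,j=0}^{m(d−1)−1} are positive semidefinite. -/
open scoped BigOperators ComplexConjugate ComplexOrder Matrix
noncomputable section
open MeasureTheory

namespace DSym

/-- Index set of the computational basis of `(ℂ^d)^{⊗N}`. -/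
abbrev Idx (d N : ℕ) := Fin N → Fin d

/-- `|i| = i_1 + ⋯ + i_N`. -/
def wsum {d N : ℕ} (i : Idx d N) : ℕ := ∑ j, (i j : ℕ)

/-- `C(N,k)_d = #{i ∈ {0,…,d−1}^N : |i| = k}`. -/
def Ccount (d N k : ℕ) : ℕ := (Finset.univ.filter (fun i : Idx d N => wsum i = k)).card

/-- The D-symmetrizator `P_D`. -/
def PD (d N : ℕ) : Matrix (Idx d N) (Idx d N) ℂ :=
  Matrix.of fun i j => if wsum i = wsum j then ((Ccount d N (wsum j) : ℂ))⁻¹ else 0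

/-- The symmetrizator `P_S`. -/
def PS (d N : ℕ) : Matrix (Idx d N) (Idx d N) ℂ :=
  Matrix.of fun i j =>
    ((N.factorial : ℂ))⁻¹ *
      ((Finset.univ.filter (fun σ : Equiv.Perm (Fin N) => i = fun k => j (σ k))).card : ℂ)

/-- The product state `|ξ^1⟩⟨ξ^1| ⊗ ⋯ ⊗ |ξ^N⟩⟨ξ^N|` as a matrix. -/
def prodProj {d N : ℕ} (ξ : Fin N → (Fin d → ℂ)) : Matrix (Idx d N) (Idx d N) ℂ :=
  Matrix.of fun i i' => ∏ j, ξ j (i j) * conj (ξ j (i' j))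

/-- Full separability of a multipartite state. -/
def FullySep {d N : ℕ} (ρ : Matrix (Idx d N) (Idx d N) ℂ) : Prop :=
  ∃ (n : ℕ) (lam : Fin n → ℝ) (ξ : Fin n → Fin N → (Fin d → ℂ)),
    (∀ α, 0 < lam α) ∧ (∀ α j, ∑ x, Complex.normSq (ξ α j x) = 1) ∧
      ρ = ∑ α, (lam α : ℂ) • prodProj (ξ α)

/-- The restricted Dicke vector `|R_{N,d;k}⟩`. -/
def Rvec (d N k : ℕ) : Idx d N → ℂ := fun i => if wsum i = k then 1 else 0

/-- The rank-one operator `|R_{N,d;k}⟩⟨R_{N,d;k}|`. -/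
def RProj (d N k : ℕ) : Matrix (Idx d N) (Idx d N) ℂ :=
  Matrix.vecMulVec (Rvec d N k) (star (Rvec d N k))

/-- Diagonal restricted Dicke state with coefficients `p`. -/
def dickeDiag (d N : ℕ) (p : ℕ → ℝ) : Matrix (Idx d N) (Idx d N) ℂ :=
  ∑ k ∈ Finset.range (N * (d - 1) + 1), (p k : ℂ) • RProj d N k

/-- Partial transposition of the first `m` tensor factors (entrywise). -/
def Gamma {d N : ℕ} (m : ℕ) (ρ : Matrix (Idx d N) (Idx d N) ℂ) :
    Matrix (Idx d N) (Idx d N) ℂ :=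
  Matrix.of fun i j =>
    ρ (fun k => if (k : ℕ) < m then j k else i k) (fun k => if (k : ℕ) < m then i k else j k)

/-- D-symmetry of a state: `ρ = P_D ρ P_D`. -/
def IsDSymm {d N : ℕ} (ρ : Matrix (Idx d N) (Idx d N) ℂ) : Prop :=
  ρ = PD d N * ρ * PD d N

/-- A pure fully separable D-symmetric state `σ = (|ξ⟩⟨ξ|)^{⊗N}`, `ξ` a unit vector. -/
def PureDSymmProd {d N : ℕ} (σ : Matrix (Idx d N) (Idx d N) ℂ) : Prop :=
  ∃ ξ : Fin d → ℂ,
    (∑ x, Complex.normSq (ξ x) = 1) ∧ σ = prodProj (fun _ : Fin N => ξ) ∧ IsDSymm σ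

/-- Entanglement witness for the D-symmetric system. -/
def IsDWitness {d N : ℕ} (W : Matrix (Idx d N) (Idx d N) ℂ) : Prop :=
  W.IsHermitian ∧ W = PD d N * W * PD d N ∧
    ∀ σ : Matrix (Idx d N) (Idx d N) ℂ, PureDSymmProd σ → 0 ≤ (W * σ).trace

/-- The dual restricted Dicke vector. -/
def Rtilde (d N k : ℕ) : Idx d N → ℂ := ((Ccount d N k : ℂ))⁻¹ • Rvec d N k

/-- Solution of the generalized moment problem on `[0,∞)`. -/
def IsGenMomentSolution (n : ℕ) (p : ℕ → ℝ) : Prop :=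
  ∃ (σ : Measure ℝ) (M : ℝ), IsFiniteMeasure σ ∧ σ {x | x < 0} = 0 ∧
    (∀ k ≤ n, Integrable (fun t => t ^ k) σ) ∧ 0 ≤ M ∧
    (∀ k < n, p k = ∫ t, t ^ k ∂σ) ∧ p n = (∫ t, t ^ n ∂σ) + M

/-- Solution of the strict moment problem on `[0,∞)`. -/
def IsStrictMomentSolution (n : ℕ) (p : ℕ → ℝ) : Prop :=
  ∃ σ : Measure ℝ, IsFiniteMeasure σ ∧ σ {x | x < 0} = 0 ∧
    (∀ k ≤ n, Integrable (fun t => t ^ k) σ) ∧ (∀ k ≤ n, p k = ∫ t, t ^ k ∂σ)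


/-- The normalization constant `C_z = (Σ_{i=0}^{d−1} |z|^{2i})^{−1/2}`. -/
def Cz (d : ℕ) (z : ℂ) : ℝ := (∑ j ∈ Finset.range d, ‖z‖ ^ (2 * j)) ^ (-(1/2 : ℝ))

/-- The vector `ζ_z = C_z Σ_{i=0}^{d−1} z^i |i⟩`. -/
def zeta (d : ℕ) (z : ℂ) : Fin d → ℂ := fun i => (Cz d z : ℂ) * z ^ (i : ℕ)

/-- The basis vector `|d−1⟩`. -/
def topVec (d : ℕ) : Fin d → ℂ := fun x => if (x : ℕ) = d - 1 then 1 else 0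

/-- Sum of the first `m` coordinates of a tuple. -/
def wsumFirst {d N : ℕ} (m : ℕ) (i : Idx d N) : ℕ :=
  ∑ j ∈ Finset.univ.filter (fun j : Fin N => (j : ℕ) < m), (i j : ℕ)

/-- Sum of the last `N − m` coordinates of a tuple. -/
def wsumLast {d N : ℕ} (m : ℕ) (i : Idx d N) : ℕ :=
  ∑ j ∈ Finset.univ.filter (fun j : Fin N => m ≤ (j : ℕ)), (i j : ℕ)

/-- The vector `|R_{m,d;a}⟩ ⊗ |R_{N−m,d;b}⟩`, viewed inside `(ℂ^d)^{⊗N}`. -/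
def splitVec (d N m : ℕ) (a b : ℤ) : Idx d N → ℂ :=
  fun i => if (wsumFirst m i : ℤ) = a ∧ (wsumLast m i : ℤ) = b then 1 else 0

/-- The operator `A_s` from the decomposition of `Γ_m(ρ)`. -/
def Amat (d N m : ℕ) (p : ℕ → ℝ) (s : ℤ) : Matrix (Idx d N) (Idx d N) ℂ :=
  ∑ k ∈ Finset.Icc (max 0 (-s)) (min ((m : ℤ) * ((d : ℤ) - 1)) ((((N : ℤ) - (m : ℤ)) * ((d : ℤ) - 1)) - s)),
  ∑ l ∈ Finset.Icc (max 0 (-s)) (min ((m : ℤ) * ((d : ℤ) - 1)) ((((N : ℤ) - (m : ℤ)) * ((d : ℤ) - 1)) - s)),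
    (p (k + l + s).toNat : ℂ) •
      Matrix.vecMulVec (splitVec d N m k (k + s)) (star (splitVec d N m l (l + s)))

/-- The permutation unitary `F_σ`, `F_σ|ξ_1,…,ξ_N⟩ = |ξ_{σ⁻¹(1)},…,ξ_{σ⁻¹(N)}⟩`. -/
def Fmat (d N : ℕ) (σ : Equiv.Perm (Fin N)) : Matrix (Idx d N) (Idx d N) ℂ :=
  Matrix.of fun x i => if x = fun k => i (σ.symm k) then 1 else 0

/-- Partial transposition with respect to the binary string `b`. -/
def partialT {d N : ℕ} (b : Fin N → Bool) (ρ : Matrix (Idx d N) (Idx d N) ℂ) :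
    Matrix (Idx d N) (Idx d N) ℂ :=
  Matrix.of fun i j => ρ (fun k => if b k then j k else i k) (fun k => if b k then i k else j k)

end DSym
end


namespace DSym
variable {d m : ℕ}


lemma wsum_split {N : ℕ} (mm : ℕ) (i : Idx d N) :
    wsum i = wsumFirst mm i + wsumLast mm i := by
  unfold wsum wsumFirst wsumLast
  rw [← Finset.sum_filter_add_sum_filter_not Finset.univ (fun j : Fin N => (j : ℕ) < mm)]
  congr 1
  apply Finset.sum_congr _ (fun _ _ => rfl)
  ext j; simp [not_lt]

lemma wsumFirst_eq (hm : 0 < m) (i : Idx d (2 * m)) :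
    wsumFirst m i = ∑ k : Fin m, (i ⟨(k : ℕ), by omega⟩ : ℕ) := by
  unfold wsumFirst
  refine Finset.sum_nbij' (fun j => (⟨(j : ℕ) % m, Nat.mod_lt _ hm⟩ : Fin m))
    (fun k => (⟨(k : ℕ), by omega⟩ : Fin (2 * m))) ?_ ?_ ?_ ?_ ?_
  · intro a _; simp
  · intro a _; simp
  · intro a ha; simp only [Finset.mem_filter] at ha
    ext; simp [Nat.mod_eq_of_lt ha.2]
  · intro a _; ext; simp [Nat.mod_eq_of_lt a.isLt]
  · intro a ha; simp only [Finset.mem_filter] at ha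
    have h : ((a:ℕ)) % m = (a:ℕ) := Nat.mod_eq_of_lt ha.2
    simp [h]

lemma wsumLast_eq (i : Idx d (2 * m)) :
    wsumLast m i = ∑ k : Fin m, (i ⟨m + (k : ℕ), by omega⟩ : ℕ) := by
  unfold wsumLast
  refine Finset.sum_nbij' (fun j => (⟨(j : ℕ) - m, by omega⟩ : Fin m))
    (fun k => (⟨m + (k : ℕ), by omega⟩ : Fin (2 * m))) ?_ ?_ ?_ ?_ ?_
  · intro a _; simp
  · intro a _; simp
  · intro a ha; simp only [Finset.mem_filter] at ha
    ext; simp; omega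
  · intro a _; ext; simp
  · intro a ha; simp only [Finset.mem_filter] at ha
    have h : m + ((a:ℕ) - m) = (a:ℕ) := by omega
    simp [h]

lemma wsumFirst_le (hd : 1 ≤ d) (hm : 0 < m) (i : Idx d (2 * m)) :
    wsumFirst m i ≤ m * (d - 1) := by
  rw [wsumFirst_eq hm]
  calc ∑ k : Fin m, (i ⟨(k : ℕ), by omega⟩ : ℕ) ≤ ∑ _k : Fin m, (d - 1) := by
        apply Finset.sum_le_sum; intro k _; have := (i ⟨(k : ℕ), by omega⟩).isLt; omega
    _ = m * (d - 1) := by simp [Finset.sum_const, mul_comm]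

lemma wsumLast_le (hd : 1 ≤ d) (i : Idx d (2 * m)) :
    wsumLast m i ≤ m * (d - 1) := by
  rw [wsumLast_eq]
  calc ∑ k : Fin m, (i ⟨m + (k : ℕ), by omega⟩ : ℕ) ≤ ∑ _k : Fin m, (d - 1) := by
        apply Finset.sum_le_sum; intro k _; have := (i ⟨m + (k : ℕ), by omega⟩).isLt; omega
    _ = m * (d - 1) := by simp [Finset.sum_const, mul_comm]

lemma exists_digits (hd : 1 ≤ d) : ∀ (n a : ℕ), a ≤ n * (d - 1) →
    ∃ f : Fin n → Fin d, ∑ j, (f j : ℕ) = a := by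
  intro n
  induction n with
  | zero => intro a ha; simp at ha; exact ⟨fun j => j.elim0, by simp [ha]⟩
  | succ n ih =>
    intro a ha
    set c := min a (d - 1) with hc
    have hnl : (n + 1) * (d - 1) = n * (d - 1) + (d - 1) := by ring
    obtain ⟨f, hf⟩ := ih (a - c) (by omega)
    refine ⟨Fin.cons ⟨c, by omega⟩ f, ?_⟩
    rw [Fin.sum_univ_succ]; simp [hf]; omega

lemma exists_rep (hd : 1 ≤ d) (hm : 0 < m) (a b : ℕ) (ha : a ≤ m * (d - 1))
    (hb : b ≤ m * (d - 1)) :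
    ∃ i : Idx d (2 * m), wsumFirst m i = a ∧ wsumLast m i = b := by
  obtain ⟨f, hf⟩ := exists_digits hd m a ha
  obtain ⟨g, hg⟩ := exists_digits hd m b hb
  refine ⟨fun k => if h : (k : ℕ) < m then f ⟨k, h⟩ else g ⟨(k : ℕ) - m, by omega⟩, ?_, ?_⟩
  · rw [wsumFirst_eq hm, ← hf]
    apply Finset.sum_congr rfl; intro k _
    simp [k.isLt]
  · rw [wsumLast_eq, ← hg]
    apply Finset.sum_congr rfl; intro k _
    have : ¬ (m + (k : ℕ) < m) := by omega
    simp only [this, dif_neg, not_false_iff]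
    congr 1; ext; simp



lemma wsum_le (hd : 1 ≤ d) {N : ℕ} (i : Idx d N) : wsum i ≤ N * (d - 1) := by
  unfold wsum
  calc ∑ j, (i j : ℕ) ≤ ∑ _j : Fin N, (d - 1) := by
        refine Finset.sum_le_sum fun j _ => ?_; have := (i j).isLt; omega
    _ = N * (d - 1) := by simp [Finset.sum_const, mul_comm]

lemma dickeDiag_apply (hd : 1 ≤ d) {N : ℕ} (p : ℕ → ℝ) (x y : Idx d N) :
    dickeDiag d N p x y = if wsum x = wsum y then ((p (wsum x) : ℝ) : ℂ) else 0 := by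
  have hx : wsum x ∈ Finset.range (N * (d - 1) + 1) := by
    simp only [Finset.mem_range, Nat.lt_succ_iff]; exact wsum_le hd x
  unfold dickeDiag RProj Rvec
  simp only [Matrix.sum_apply, Matrix.smul_apply, Matrix.vecMulVec_apply, Pi.star_apply,
    smul_eq_mul]
  by_cases h : wsum x = wsum y
  · rw [if_pos h]
    have hterm : ∀ k ∈ Finset.range (N * (d - 1) + 1),
        (p k : ℂ) * ((if wsum x = k then (1:ℂ) else 0) * star (if wsum y = k then (1:ℂ) else 0))
          = if wsum x = k then ((p k : ℝ) : ℂ) else 0 := by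
      intro k _
      by_cases hk : wsum x = k
      · have hk2 : wsum y = k := h.symm.trans hk
        simp [hk, hk2]
      · simp [hk]
    rw [Finset.sum_congr rfl hterm,
      Finset.sum_ite_eq (Finset.range (N * (d - 1) + 1)) (wsum x) (fun k => ((p k : ℝ) : ℂ)),
      if_pos hx]
  · rw [if_neg h]
    refine Finset.sum_eq_zero fun k _ => ?_
    by_cases hk : wsum x = k
    · have hk2 : ¬ (wsum y = k) := fun hc => h (hk.trans hc.symm)
      simp [hk, hk2]
    · simp [hk]

lemma Gamma_dicke_apply (hd : 1 ≤ d) (p : ℕ → ℝ) (i j : Idx d (2 * m)) :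
    Gamma m (dickeDiag d (2 * m) p) i j =
      if wsumFirst m j + wsumLast m i = wsumFirst m i + wsumLast m j
      then ((p (wsumFirst m i + wsumLast m j) : ℝ) : ℂ) else 0 := by
  have key : ∀ a b : Idx d (2 * m),
      wsum (fun k => if (k : ℕ) < m then a k else b k) = wsumFirst m a + wsumLast m b := by
    intro a b
    rw [wsum_split m]
    congr 1
    · unfold wsumFirst
      refine Finset.sum_congr rfl fun k hk => ?_
      simp only [Finset.mem_filter, Finset.mem_univ, true_and] at hk
      simp [hk]
    · unfold wsumLast
      refine Finset.sum_congr rfl fun k hk => ?_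
      simp only [Finset.mem_filter, Finset.mem_univ, true_and] at hk
      have hk2 : ¬ ((k : ℕ) < m) := by omega
      simp [hk2]
  show dickeDiag d (2 * m) p (fun k => if (k : ℕ) < m then j k else i k)
      (fun k => if (k : ℕ) < m then i k else j k) = _
  rw [dickeDiag_apply hd, key, key]
  by_cases h : wsumFirst m j + wsumLast m i = wsumFirst m i + wsumLast m j
  · rw [if_pos h, if_pos h, h]
  · rw [if_neg h, if_neg h]

lemma qf_reps {α ι : Type*} [Fintype α] [DecidableEq α] [Fintype ι] [DecidableEq ι]
    (A : Matrix ι ι ℂ) (r : α → ι) (v : α → ℂ) :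
    ∑ i, ∑ j, (∑ a, if i = r a then v a else 0) * A i j *
        (∑ c, if j = r c then v c else 0)
      = ∑ a, ∑ c, v a * A (r a) (r c) * v c := by
  have h1 : ∀ i j, (∑ a, if i = r a then v a else 0) * A i j *
        (∑ c, if j = r c then v c else 0)
      = ∑ a, ∑ c, if i = r a then (if j = r c then v a * A i j * v c else 0) else 0 := by
    intro i j
    rw [Finset.sum_mul, Finset.sum_mul_sum]
    refine Finset.sum_congr rfl fun a _ => Finset.sum_congr rfl fun c _ => ?_
    by_cases h : i = r a <;> by_cases h' : j = r c <;> simp [h, h']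
  simp only [h1]
  have h2 : ∀ i : ι, (∑ j : ι, ∑ a : α, ∑ c : α,
        if i = r a then (if j = r c then v a * A i j * v c else 0) else 0)
      = ∑ a : α, ∑ j : ι, ∑ c : α,
        if i = r a then (if j = r c then v a * A i j * v c else 0) else 0 := fun i =>
    Finset.sum_comm
  simp only [h2]
  rw [Finset.sum_comm]
  refine Finset.sum_congr rfl fun a _ => ?_
  have h3 : ∀ i : ι, (∑ j : ι, ∑ c : α,
        if i = r a then (if j = r c then v a * A i j * v c else 0) else 0)
      = if i = r a then (∑ j : ι, ∑ c : α, if j = r c then v a * A i j * v c else 0) else 0 := by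
    intro i; by_cases h : i = r a <;> simp [h]
  simp only [h3]
  rw [Finset.sum_ite_eq' Finset.univ (r a)
    (fun i => ∑ j : ι, ∑ c : α, if j = r c then v a * A i j * v c else 0),
    if_pos (Finset.mem_univ _)]
  rw [Finset.sum_comm]
  refine Finset.sum_congr rfl fun c _ => ?_
  rw [Finset.sum_ite_eq' Finset.univ (r c) (fun j => v a * A (r a) j * v c),
    if_pos (Finset.mem_univ _)]

lemma fiber_sum {ι κ : Type*} [DecidableEq κ] (T : Finset ι) (S : Finset κ)
    (φ : ι → κ) (hφ : ∀ i ∈ T, φ i ∈ S) (h : κ → ℂ) (x : ι → ℂ) :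
    ∑ i ∈ T, h (φ i) * x i
      = ∑ P ∈ S, h P * ∑ i ∈ T.filter (fun i => φ i = P), x i := by
  rw [← Finset.sum_fiberwise_of_maps_to hφ (fun i => h (φ i) * x i)]
  refine Finset.sum_congr rfl fun P _ => ?_
  rw [Finset.mul_sum]
  refine Finset.sum_congr rfl fun i hi => ?_
  simp only [Finset.mem_filter] at hi
  rw [hi.2]

lemma fiber_sum2 {ι κ : Type*} [DecidableEq κ] (T : Finset ι) (S : Finset κ)
    (φ : ι → κ) (hφ : ∀ i ∈ T, φ i ∈ S) (g : κ → κ → ℂ) (x : ι → ℂ) :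
    ∑ i ∈ T, ∑ j ∈ T, star (x i) * g (φ i) (φ j) * x j
      = ∑ P ∈ S, ∑ Q ∈ S,
          star (∑ i ∈ T.filter (fun i => φ i = P), x i) * g P Q *
            (∑ j ∈ T.filter (fun j => φ j = Q), x j) := by
  have step1 : ∀ i ∈ T, ∑ j ∈ T, star (x i) * g (φ i) (φ j) * x j
      = ∑ Q ∈ S, (star (x i) * g (φ i) Q) * ∑ j ∈ T.filter (fun j => φ j = Q), x j :=
    fun i _ => fiber_sum T S φ hφ (fun Q => star (x i) * g (φ i) Q) x
  rw [Finset.sum_congr rfl step1, Finset.sum_comm]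
  conv_rhs => rw [Finset.sum_comm]
  refine Finset.sum_congr rfl fun Q _ => ?_
  have step2 : ∑ i ∈ T,
      (fun P => g P Q * ∑ j ∈ T.filter (fun j => φ j = Q), x j) (φ i) * (star (x i))
      = ∑ P ∈ S, (g P Q * ∑ j ∈ T.filter (fun j => φ j = Q), x j) *
          ∑ i ∈ T.filter (fun i => φ i = P), star (x i) :=
    fiber_sum T S φ hφ (fun P => g P Q * ∑ j ∈ T.filter (fun j => φ j = Q), x j)
      (fun i => star (x i))
  simp only at step2
  calc ∑ i ∈ T, star (x i) * g (φ i) Q * ∑ j ∈ T.filter (fun j => φ j = Q), x j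
      = ∑ i ∈ T, (g (φ i) Q * ∑ j ∈ T.filter (fun j => φ j = Q), x j) * star (x i) := by
        refine Finset.sum_congr rfl fun i _ => by ring
    _ = ∑ P ∈ S, (g P Q * ∑ j ∈ T.filter (fun j => φ j = Q), x j) *
          ∑ i ∈ T.filter (fun i => φ i = P), star (x i) := step2
    _ = ∑ P ∈ S, star (∑ i ∈ T.filter (fun i => φ i = P), x i) * g P Q *
          ∑ j ∈ T.filter (fun j => φ j = Q), x j := by
        refine Finset.sum_congr rfl fun P _ => ?_
        rw [star_sum]
        ring

lemma qf_expand {R : Type*} [CommSemiring R] [StarRing R] {n : Type*} [Fintype n]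
    (A : Matrix n n R) (x : n → R) :
    dotProduct (star x) (A.mulVec x) = ∑ i, ∑ j, star (x i) * A i j * x j := by
  simp only [dotProduct, Matrix.mulVec, Pi.star_apply, Finset.mul_sum, mul_assoc]

lemma posSemidef_map_ofReal {n : Type*} [Fintype n] [DecidableEq n] {H : Matrix n n ℝ}
    (hH : H.PosSemidef) : (H.map (fun r : ℝ => (r : ℂ))).PosSemidef := by
  open scoped MatrixOrder in
  obtain ⟨B, rfl⟩ : ∃ B : Matrix n n ℝ, H = Bᴴ * B :=
    CStarAlgebra.nonneg_iff_eq_star_mul_self.mp hH.nonneg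
  have h : (Bᴴ * B).map (fun r : ℝ => (r : ℂ))
      = (B.map (fun r : ℝ => (r : ℂ)))ᴴ * (B.map (fun r : ℝ => (r : ℂ))) := by
    ext i j
    simp [Matrix.mul_apply, Matrix.map_apply, Matrix.conjTranspose_apply, Complex.conj_ofReal]
  rw [h]
  exact Matrix.posSemidef_conjTranspose_mul_self _


end DSym

namespace DSym

theorem stmt9 (d m : ℕ) (hd : 2 ≤ d) (hm : 1 ≤ m) (p : ℕ → ℝ)
    (hp : ∀ k ≤ 2 * m * (d - 1), 0 ≤ p k) :
    (Gamma m (dickeDiag d (2 * m) p)).PosSemidef ↔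
      (Matrix.PosSemidef
        (Matrix.of fun k l : Fin (m * (d - 1) + 1) => p ((k : ℕ) + (l : ℕ)))) ∧
      (Matrix.PosSemidef
        (Matrix.of fun k l : Fin (m * (d - 1)) => p ((k : ℕ) + (l : ℕ) + 1))) := by
  classical
  have hd1 : 1 ≤ d := by omega
  have hm0 : 0 < m := hm
  set M := m * (d - 1) with hMdef
  have hM1 : 1 ≤ M := Nat.mul_pos hm0 (by omega)
  have hwF : ∀ i : Idx d (2 * m), wsumFirst m i ≤ M := fun i => wsumFirst_le hd1 hm0 i
  have hwL : ∀ i : Idx d (2 * m), wsumLast m i ≤ M := fun i => wsumLast_le hd1 i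
  set G := Gamma m (dickeDiag d (2 * m) p) with hGdef
  have hGapp : ∀ i j : Idx d (2 * m), G i j =
      if wsumFirst m j + wsumLast m i = wsumFirst m i + wsumLast m j
      then ((p (wsumFirst m i + wsumLast m j) : ℝ) : ℂ) else 0 := fun i j =>
    Gamma_dicke_apply hd1 p i j
  have hGH : G.IsHermitian := by
    ext i j
    rw [Matrix.conjTranspose_apply, hGapp, hGapp]
    by_cases h : wsumFirst m j + wsumLast m i = wsumFirst m i + wsumLast m j
    · rw [if_pos h.symm, if_pos h, h]
      exact Complex.conj_ofReal _
    · rw [if_neg (fun hc => h hc.symm), if_neg h, star_zero]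
  constructor
  · intro hPSD
    constructor
    · -- Hankel matrix H0 PSD
      refine Matrix.PosSemidef.of_dotProduct_mulVec_nonneg ?_ ?_
      · ext k l
        simp only [Matrix.conjTranspose_apply, Matrix.of_apply, star_trivial]
        rw [Nat.add_comm]
      · intro v
        have hrep0 : ∀ a : Fin (M + 1), ∃ i : Idx d (2 * m),
            wsumFirst m i = (a : ℕ) ∧ wsumLast m i = (a : ℕ) := fun a =>
          exists_rep hd1 hm0 a a (by have := a.isLt; omega) (by have := a.isLt; omega)
        choose r0 hr0F hr0L using hrep0
        have h := hPSD.dotProduct_mulVec_nonneg (fun i => ∑ a : Fin (M + 1), if i = r0 a then ((v a : ℝ) : ℂ) else 0)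
        rw [qf_expand] at h
        have hst : ∀ i : Idx d (2 * m),
            star (∑ a : Fin (M + 1), if i = r0 a then ((v a : ℝ) : ℂ) else 0)
              = ∑ a : Fin (M + 1), if i = r0 a then ((v a : ℝ) : ℂ) else 0 := by
          intro i
          rw [star_sum]
          refine Finset.sum_congr rfl fun a _ => ?_
          by_cases h' : i = r0 a <;> simp [h']
        simp only [hst] at h
        rw [qf_reps G r0 (fun a => ((v a : ℝ) : ℂ))] at h
        have hent : ∀ a c : Fin (M + 1), G (r0 a) (r0 c) = ((p ((a : ℕ) + (c : ℕ)) : ℝ) : ℂ) := by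
          intro a c
          rw [hGapp, hr0F, hr0L, hr0F, hr0L, if_pos (by omega)]
        simp only [hent] at h
        have hcast : ((∑ a : Fin (M + 1), ∑ c : Fin (M + 1),
              v a * p ((a : ℕ) + (c : ℕ)) * v c : ℝ) : ℂ)
            = ∑ a : Fin (M + 1), ∑ c : Fin (M + 1),
              ((v a : ℝ) : ℂ) * ((p ((a : ℕ) + (c : ℕ)) : ℝ) : ℂ) * ((v c : ℝ) : ℂ) := by
          push_cast; ring
        rw [← hcast] at h
        have h2 : (0 : ℝ) ≤ ∑ a : Fin (M + 1), ∑ c : Fin (M + 1),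
            v a * p ((a : ℕ) + (c : ℕ)) * v c := Complex.zero_le_real.mp h
        rw [qf_expand]
        simpa [Matrix.of_apply] using h2
    · -- Hankel matrix H1 PSD
      refine Matrix.PosSemidef.of_dotProduct_mulVec_nonneg ?_ ?_
      · ext k l
        simp only [Matrix.conjTranspose_apply, Matrix.of_apply, star_trivial]
        rw [Nat.add_comm (k : ℕ) (l : ℕ)]
      · intro v
        have hrep1 : ∀ a : Fin M, ∃ i : Idx d (2 * m),
            wsumFirst m i = (a : ℕ) ∧ wsumLast m i = (a : ℕ) + 1 := fun a =>
          exists_rep hd1 hm0 a ((a : ℕ) + 1) (by have := a.isLt; omega) (by have := a.isLt; omega)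
        choose r1 hr1F hr1L using hrep1
        have h := hPSD.dotProduct_mulVec_nonneg (fun i => ∑ a : Fin M, if i = r1 a then ((v a : ℝ) : ℂ) else 0)
        rw [qf_expand] at h
        have hst : ∀ i : Idx d (2 * m),
            star (∑ a : Fin M, if i = r1 a then ((v a : ℝ) : ℂ) else 0)
              = ∑ a : Fin M, if i = r1 a then ((v a : ℝ) : ℂ) else 0 := by
          intro i
          rw [star_sum]
          refine Finset.sum_congr rfl fun a _ => ?_
          by_cases h' : i = r1 a <;> simp [h']
        simp only [hst] at h
        rw [qf_reps G r1 (fun a => ((v a : ℝ) : ℂ))] at h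
        have hent : ∀ a c : Fin M, G (r1 a) (r1 c) = ((p ((a : ℕ) + (c : ℕ) + 1) : ℝ) : ℂ) := by
          intro a c
          rw [hGapp, hr1F, hr1L, hr1F, hr1L, if_pos (by omega)]
          have harg : (a : ℕ) + ((c : ℕ) + 1) = (a : ℕ) + (c : ℕ) + 1 := by omega
          rw [harg]
        simp only [hent] at h
        have hcast : ((∑ a : Fin M, ∑ c : Fin M,
              v a * p ((a : ℕ) + (c : ℕ) + 1) * v c : ℝ) : ℂ)
            = ∑ a : Fin M, ∑ c : Fin M,
              ((v a : ℝ) : ℂ) * ((p ((a : ℕ) + (c : ℕ) + 1) : ℝ) : ℂ) * ((v c : ℝ) : ℂ) := by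
          push_cast; ring
        rw [← hcast] at h
        have h2 : (0 : ℝ) ≤ ∑ a : Fin M, ∑ c : Fin M,
            v a * p ((a : ℕ) + (c : ℕ) + 1) * v c := Complex.zero_le_real.mp h
        rw [qf_expand]
        simpa [Matrix.of_apply] using h2
  · rintro ⟨hH0, hH1⟩
    refine Matrix.PosSemidef.of_dotProduct_mulVec_nonneg hGH fun x => ?_
    rw [qf_expand]
    let φ : Idx d (2 * m) → Fin (M + 1) × Fin (M + 1) := fun i =>
      (⟨wsumFirst m i, by have := hwF i; omega⟩, ⟨wsumLast m i, by have := hwL i; omega⟩)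
    let g : Fin (M + 1) × Fin (M + 1) → Fin (M + 1) × Fin (M + 1) → ℂ := fun P Q =>
      if ((Q.1 : ℕ) + (P.2 : ℕ) = (P.1 : ℕ) + (Q.2 : ℕ))
      then ((p ((P.1 : ℕ) + (Q.2 : ℕ)) : ℝ) : ℂ) else 0
    have hgapp : ∀ P Q, g P Q = if ((Q.1 : ℕ) + (P.2 : ℕ) = (P.1 : ℕ) + (Q.2 : ℕ))
        then ((p ((P.1 : ℕ) + (Q.2 : ℕ)) : ℝ) : ℂ) else 0 := fun _ _ => rfl
    have hGg : ∀ i j, G i j = g (φ i) (φ j) := by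
      intro i j; rw [hGapp, hgapp]
    set Y : Fin (M + 1) × Fin (M + 1) → ℂ := fun P =>
      ∑ i ∈ Finset.univ.filter (fun i => φ i = P), x i with hYdef
    have main : ∑ i, ∑ j, star (x i) * G i j * x j
        = ∑ P, ∑ Q, star (Y P) * g P Q * Y Q := by
      calc ∑ i, ∑ j, star (x i) * G i j * x j
          = ∑ i, ∑ j, star (x i) * g (φ i) (φ j) * x j :=
            Finset.sum_congr rfl fun i _ => Finset.sum_congr rfl fun j _ => by rw [hGg]
        _ = ∑ P, ∑ Q, star (Y P) * g P Q * Y Q :=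
            fiber_sum2 Finset.univ Finset.univ φ (fun _ _ => Finset.mem_univ _) g x
    rw [main]
    let ψ : Fin (M + 1) × Fin (M + 1) → Fin (2 * M + 1) := fun P =>
      ⟨(P.2 : ℕ) + M - (P.1 : ℕ), by have := P.1.isLt; have := P.2.isLt; omega⟩
    have hψg : ∀ P Q, g P Q ≠ 0 → ψ Q = ψ P := by
      intro P Q hne
      by_cases hc : ((Q.1 : ℕ) + (P.2 : ℕ) = (P.1 : ℕ) + (Q.2 : ℕ))
      · have h1 := P.1.isLt; have h2 := P.2.isLt; have h3 := Q.1.isLt; have h4 := Q.2.isLt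
        apply Fin.ext
        show (Q.2 : ℕ) + M - (Q.1 : ℕ) = (P.2 : ℕ) + M - (P.1 : ℕ)
        omega
      · exact absurd ((hgapp P Q).trans (if_neg hc)) hne
    rw [← Finset.sum_fiberwise_of_maps_to
      (fun P (_ : P ∈ (Finset.univ : Finset (Fin (M + 1) × Fin (M + 1)))) =>
        Finset.mem_univ (ψ P))
      (fun P => ∑ Q, star (Y P) * g P Q * Y Q)]
    apply Finset.sum_nonneg
    intro s _
    have hrestrict : ∀ P ∈ Finset.univ.filter (fun P => ψ P = s),
        (∑ Q, star (Y P) * g P Q * Y Q)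
          = ∑ Q ∈ Finset.univ.filter (fun Q => ψ Q = s), star (Y P) * g P Q * Y Q := by
      intro P hP
      simp only [Finset.mem_filter] at hP
      refine (Finset.sum_filter_of_ne fun Q _ hne => ?_).symm
      have hg0 : g P Q ≠ 0 := by
        intro h0; exact hne (by rw [h0, mul_zero, zero_mul])
      rw [hψg P Q hg0, hP.2]
    rw [Finset.sum_congr rfl hrestrict]
    set T := Finset.univ.filter (fun P : Fin (M + 1) × Fin (M + 1) => ψ P = s) with hT
    have hfib : ∀ P ∈ T, (P.2 : ℕ) + M = (s : ℕ) + (P.1 : ℕ) := by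
      intro P hP
      simp only [hT, Finset.mem_filter, Finset.mem_univ, true_and] at hP
      have h1 := P.1.isLt
      have h2 : (P.2 : ℕ) + M - (P.1 : ℕ) = (s : ℕ) := congrArg Fin.val hP
      omega
    have hgfib : ∀ P ∈ T, ∀ Q ∈ T, g P Q = ((p ((P.1 : ℕ) + (Q.2 : ℕ)) : ℝ) : ℂ) := by
      intro P hP Q hQ
      have h1 := hfib P hP; have h2 := hfib Q hQ
      rw [hgapp, if_pos (by omega)]
    rcases Nat.even_or_odd ((s : ℕ) + M) with hpar | hpar
    · -- even shift: use the first Hankel matrix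
      have hpar' : ((s : ℕ) + M) % 2 = 0 := Nat.even_iff.mp hpar
      let θ : Fin (M + 1) × Fin (M + 1) → Fin (M + 1) := fun P =>
        ⟨((P.1 : ℕ) + (P.2 : ℕ)) / 2, by have := P.1.isLt; have := P.2.isLt; omega⟩
      have hθ : ∀ P ∈ T, ∀ Q ∈ T, ((θ P : ℕ)) + ((θ Q : ℕ)) = (P.1 : ℕ) + (Q.2 : ℕ) := by
        intro P hP Q hQ
        have h1 := hfib P hP; have h2 := hfib Q hQ
        have e1 : (θ P : ℕ) = ((P.1 : ℕ) + (P.2 : ℕ)) / 2 := rfl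
        have e2 : (θ Q : ℕ) = ((Q.1 : ℕ) + (Q.2 : ℕ)) / 2 := rfl
        have h3 := P.1.isLt; have h4 := P.2.isLt; have h5 := Q.1.isLt; have h6 := Q.2.isLt
        rw [e1, e2]; omega
      have hsum : ∑ P ∈ T, ∑ Q ∈ T, star (Y P) * g P Q * Y Q
          = ∑ P ∈ T, ∑ Q ∈ T, star (Y P) *
              ((p ((θ P : ℕ) + (θ Q : ℕ)) : ℝ) : ℂ) * Y Q := by
        refine Finset.sum_congr rfl fun P hP => Finset.sum_congr rfl fun Q hQ => ?_
        rw [hgfib P hP Q hQ, hθ P hP Q hQ]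
      have h2 := fiber_sum2 T Finset.univ θ (fun P _ => Finset.mem_univ (θ P))
        (fun u v => ((p ((u : ℕ) + (v : ℕ)) : ℝ) : ℂ)) Y
      rw [hsum, h2]
      have hpsd := (posSemidef_map_ofReal hH0).dotProduct_mulVec_nonneg
        (fun u => ∑ P ∈ T.filter (fun P => θ P = u), Y P)
      rw [qf_expand] at hpsd
      simpa [Matrix.map_apply, Matrix.of_apply] using hpsd
    · -- odd shift: use the second Hankel matrix
      have hpar' : ((s : ℕ) + M) % 2 = 1 := Nat.odd_iff.mp hpar
      let θ : Fin (M + 1) × Fin (M + 1) → Fin M := fun P =>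
        ⟨min (((P.1 : ℕ) + (P.2 : ℕ)) / 2) (M - 1), by
          have := P.1.isLt; have := P.2.isLt; omega⟩
      have hθ : ∀ P ∈ T, ∀ Q ∈ T, ((θ P : ℕ)) + ((θ Q : ℕ)) + 1 = (P.1 : ℕ) + (Q.2 : ℕ) := by
        intro P hP Q hQ
        have h1 := hfib P hP; have h2 := hfib Q hQ
        have e1 : (θ P : ℕ) = min (((P.1 : ℕ) + (P.2 : ℕ)) / 2) (M - 1) := rfl
        have e2 : (θ Q : ℕ) = min (((Q.1 : ℕ) + (Q.2 : ℕ)) / 2) (M - 1) := rfl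
        have h3 := P.1.isLt; have h4 := P.2.isLt; have h5 := Q.1.isLt; have h6 := Q.2.isLt
        rw [e1, e2]; omega
      have hsum : ∑ P ∈ T, ∑ Q ∈ T, star (Y P) * g P Q * Y Q
          = ∑ P ∈ T, ∑ Q ∈ T, star (Y P) *
              ((p ((θ P : ℕ) + (θ Q : ℕ) + 1) : ℝ) : ℂ) * Y Q := by
        refine Finset.sum_congr rfl fun P hP => Finset.sum_congr rfl fun Q hQ => ?_
        rw [hgfib P hP Q hQ, ← hθ P hP Q hQ]
      have h2 := fiber_sum2 T Finset.univ θ (fun P _ => Finset.mem_univ (θ P))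
        (fun u v => ((p ((u : ℕ) + (v : ℕ) + 1) : ℝ) : ℂ)) Y
      rw [hsum, h2]
      have hpsd := (posSemidef_map_ofReal hH1).dotProduct_mulVec_nonneg
        (fun u => ∑ P ∈ T.filter (fun P => θ P = u), Y P)
      rw [qf_expand] at hpsd
      simpa [Matrix.map_apply, Matrix.of_apply] using hpsd


end DSym
end

section
/- If (p_k)_{k=0}^{N(d−1)} is a geometric sequence, i.e. p_k = t^k for some t > 0, then the diagonal restricted Dicke state ρ = Σ_{k=0}^{N(d−1)} t^k |R_{N,d;k}⟩⟨R_{N,d;k}| is fully separable. -/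
open scoped BigOperators ComplexConjugate ComplexOrder Matrix
namespace DSym

lemma rootsum (M : ℕ) (hM : 0 < M) (a b : ℕ) (ha : a < M) (hb : b < M) :
    ∑ α ∈ Finset.range M,
      (Complex.exp (((2 * Real.pi / M : ℝ) : ℂ) * Complex.I) ^ a *
        (conj (Complex.exp (((2 * Real.pi / M : ℝ) : ℂ) * Complex.I))) ^ b) ^ α
      = if a = b then (M : ℂ) else 0 := by
  have hMC : (M : ℂ) ≠ 0 := Nat.cast_ne_zero.mpr hM.ne'
  have hconj : conj (Complex.exp (((2 * Real.pi / M : ℝ) : ℂ) * Complex.I))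
      = Complex.exp (-(((2 * Real.pi / M : ℝ) : ℂ) * Complex.I)) := by
    rw [← Complex.exp_conj]
    congr 1
    simp [Complex.conj_ofReal, map_ofNat]
  have hu : Complex.exp (((2 * Real.pi / M : ℝ) : ℂ) * Complex.I) ^ a *
        (conj (Complex.exp (((2 * Real.pi / M : ℝ) : ℂ) * Complex.I))) ^ b
      = Complex.exp ((((a : ℂ) - b) * ((2 * Real.pi / M : ℝ) : ℂ)) * Complex.I) := by
    rw [hconj, ← Complex.exp_nat_mul, ← Complex.exp_nat_mul, ← Complex.exp_add]
    ring_nf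
  rw [hu]
  by_cases hab : a = b
  · subst hab
    simp
  · rw [if_neg hab]
    have hune : Complex.exp ((((a : ℂ) - b) * ((2 * Real.pi / M : ℝ) : ℂ)) * Complex.I) ≠ 1 := by
      intro h
      rw [Complex.exp_eq_one_iff] at h
      obtain ⟨n, hn⟩ := h
      have hn' : (((a : ℂ) - b) * ((2 * Real.pi / M : ℝ) : ℂ)) * Complex.I
          = ((n : ℂ) * (2 * Real.pi)) * Complex.I := by rw [hn]; ring
      have hre : ((a : ℝ) - b) * (2 * Real.pi / M) = n * (2 * Real.pi) := by
        have h2 := mul_right_cancel₀ Complex.I_ne_zero hn'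
        exact_mod_cast h2
      have hMR : (0 : ℝ) < M := by exact_mod_cast hM
      have hpi : (0 : ℝ) < 2 * Real.pi := by positivity
      have hab' : (a : ℝ) - b = n * M := by
        field_simp at hre
        nlinarith [hre]
      have habZ : (a : ℤ) - b = n * M := by exact_mod_cast hab'
      have hn0 : n ≠ 0 := by
        intro h0; subst h0; simp at habZ; omega
      have h1 : (1 : ℤ) ≤ |n| := Int.one_le_abs hn0
      have h2 : |(a : ℤ) - b| < M := by
        rw [abs_lt]; constructor <;> omega
      rw [habZ, abs_mul, abs_of_nonneg (by positivity : (0:ℤ) ≤ (M:ℤ))] at h2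
      nlinarith
    rw [geom_sum_eq hune, ← Complex.exp_nat_mul]
    have : (M : ℂ) * ((((a : ℂ) - b) * ((2 * Real.pi / M : ℝ) : ℂ)) * Complex.I)
        = (((a : ℤ) - b : ℤ) : ℂ) * (2 * Real.pi * Complex.I) := by
      push_cast
      field_simp
    rw [this, Complex.exp_int_mul_two_pi_mul_I]
    simp

theorem stmt14 (d N : ℕ) (hd : 2 ≤ d) (hN : 2 ≤ N) (t : ℝ) (ht : 0 < t)
    (p : ℕ → ℝ) (hp : ∀ k, p k = t ^ k) :
    FullySep (dickeDiag d N p) := by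
  classical
  set M := N * (d - 1) + 1 with hMdef
  have hMpos : 0 < M := Nat.succ_pos _
  have hMC : (M : ℂ) ≠ 0 := Nat.cast_ne_zero.mpr hMpos.ne'
  set S : ℝ := ∑ j ∈ Finset.range d, t ^ j with hSdef
  have hSpos : 0 < S := by
    apply Finset.sum_pos (fun j _ => pow_pos ht j)
    exact ⟨0, Finset.mem_range.mpr (by omega)⟩
  set ω : ℂ := Complex.exp (((2 * Real.pi / M : ℝ) : ℂ) * Complex.I) with hωdef
  set c : ℝ := (Real.sqrt S)⁻¹ with hcdef
  have hc2 : c ^ 2 = S⁻¹ := by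
    rw [hcdef, inv_pow, Real.sq_sqrt hSpos.le]
  have habs : Complex.normSq ω = 1 := by
    rw [hωdef, Complex.normSq_eq_norm_sq, Complex.norm_exp_ofReal_mul_I]; norm_num
  have hst : ((Real.sqrt t : ℝ) : ℂ) ^ 2 = (t : ℂ) := by
    rw [← Complex.ofReal_pow, Real.sq_sqrt ht.le]
  refine ⟨M, fun _ => S ^ N / M,
    fun α _ x => (c : ℂ) * (((Real.sqrt t : ℝ) : ℂ) * ω ^ (α : ℕ)) ^ (x : ℕ),
    fun _ => by positivity, ?_, ?_⟩
  · intro α j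
    have hns : ∀ x : Fin d,
        Complex.normSq ((c : ℂ) * (((Real.sqrt t : ℝ) : ℂ) * ω ^ (α : ℕ)) ^ (x : ℕ))
          = c ^ 2 * t ^ (x : ℕ) := by
      intro x
      rw [Complex.normSq_mul, map_pow, Complex.normSq_mul, Complex.normSq_ofReal,
        Complex.normSq_ofReal, map_pow, habs, Real.mul_self_sqrt ht.le]
      ring
    simp only [hns]
    rw [← Finset.mul_sum, hc2, Fin.sum_univ_eq_sum_range (fun x => t ^ x) d, ← hSdef,
      inv_mul_cancel₀ hSpos.ne']
  · ext i i'
    clear_value M S c ω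
    have hwle : ∀ j : Idx d N, wsum j < M := by
      intro j
      have : wsum j ≤ N * (d - 1) := by
        calc wsum j ≤ ∑ _k : Fin N, (d - 1) :=
              Finset.sum_le_sum (fun k _ => Nat.le_sub_one_of_lt (j k).2)
          _ = N * (d - 1) := by simp [Finset.sum_const, mul_comm]
      omega
    -- LHS
    have hL : dickeDiag d N p i i' =
        if wsum i = wsum i' then ((t : ℂ) ^ wsum i) else 0 := by
      rw [dickeDiag, ← hMdef, Matrix.sum_apply]
      simp only [Matrix.smul_apply, RProj, Matrix.vecMulVec_apply, Pi.star_apply, Rvec,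
        smul_eq_mul]
      by_cases h : wsum i = wsum i'
      · rw [if_pos h]
        rw [Finset.sum_eq_single (wsum i)]
        · rw [if_pos rfl, if_pos h.symm, hp]
          push_cast
          simp
        · intro k _ hk
          rw [if_neg (Ne.symm hk)]
          simp
        · intro hmem
          exact absurd (Finset.mem_range.mpr (hwle i)) hmem
      · rw [if_neg h]
        apply Finset.sum_eq_zero
        intro k _
        rcases eq_or_ne (wsum i) k with h1 | h1
        · have h2 : wsum i' ≠ k := fun e => h (h1.trans e.symm)
          rw [if_neg h2]
          simp
        · rw [if_neg h1]
          simp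
    rw [hL, Matrix.sum_apply]
    have hfac : ∀ (α : Fin M) (j : Fin N),
        ((c : ℂ) * (((Real.sqrt t : ℝ) : ℂ) * ω ^ (α : ℕ)) ^ ((i j : ℕ))) *
          conj ((c : ℂ) * (((Real.sqrt t : ℝ) : ℂ) * ω ^ (α : ℕ)) ^ ((i' j : ℕ)))
        = (c : ℂ) ^ 2 *
          (((Real.sqrt t : ℝ) : ℂ) ^ ((i j : ℕ)) * ((Real.sqrt t : ℝ) : ℂ) ^ ((i' j : ℕ))) *
          ((ω ^ (α : ℕ)) ^ ((i j : ℕ)) * ((conj ω) ^ (α : ℕ)) ^ ((i' j : ℕ))) := by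
      intro α j
      simp only [map_mul, map_pow, Complex.conj_ofReal]
      rw [mul_pow, mul_pow]
      ring
    have hprod : ∀ α : Fin M,
        (((S ^ N / M : ℝ) : ℂ) • prodProj
          (fun _ x => (c : ℂ) * (((Real.sqrt t : ℝ) : ℂ) * ω ^ (α : ℕ)) ^ (x : ℕ))) i i'
        = (((S ^ N / M : ℝ) : ℂ) * ((c : ℂ) ^ 2) ^ N *
            ((Real.sqrt t : ℝ) : ℂ) ^ (wsum i + wsum i')) *
            (ω ^ wsum i * (conj ω) ^ wsum i') ^ (α : ℕ) := by
      intro α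
      simp only [Matrix.smul_apply, prodProj, Matrix.of_apply, smul_eq_mul]
      rw [Finset.prod_congr rfl (fun j _ => hfac α j)]
      simp only [Finset.prod_mul_distrib, Finset.prod_const, Finset.prod_pow_eq_pow_sum,
        Finset.card_univ, Fintype.card_fin]
      rw [show (∑ j : Fin N, ((i j : ℕ))) = wsum i from rfl,
        show (∑ j : Fin N, ((i' j : ℕ))) = wsum i' from rfl,
        pow_right_comm ω (α : ℕ) (wsum i), pow_right_comm (conj ω) (α : ℕ) (wsum i'),
        ← mul_pow, pow_add]
      ring
    simp only []
    rw [Finset.sum_congr rfl (fun α _ => hprod α), ← Finset.mul_sum,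
      Fin.sum_univ_eq_sum_range (fun k => (ω ^ wsum i * (conj ω) ^ wsum i') ^ k) M,
      hωdef, rootsum M hMpos _ _ (hwle i) (hwle i')]
    by_cases hab : wsum i = wsum i'
    · rw [if_pos hab, if_pos hab, ← hab, ← two_mul, pow_mul, hst]
      have hcc : ((c : ℝ) : ℂ) ^ 2 = ((S⁻¹ : ℝ) : ℂ) := by
        rw [← Complex.ofReal_pow, hc2]
      rw [hcc]
      have hSC : ((S : ℝ) : ℂ) ≠ 0 := Complex.ofReal_ne_zero.mpr hSpos.ne'
      have h1 : ((S ^ N / (M : ℝ) : ℝ) : ℂ) * (((S⁻¹ : ℝ)) : ℂ) ^ N * (M : ℂ) = 1 := by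
        rw [Complex.ofReal_div, Complex.ofReal_pow, Complex.ofReal_inv,
          Complex.ofReal_natCast]
        rw [inv_pow, div_mul_eq_mul_div, mul_inv_cancel₀ (pow_ne_zero N hSC), one_div,
          inv_mul_cancel₀ hMC]
      linear_combination (-(((t : ℝ) : ℂ) ^ wsum i)) * h1
    · rw [if_neg hab, if_neg hab, mul_zero]

end DSym
end
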